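/- For every natural number n, the shifted period-6 alternating window sum of row 2n of Pascal's triangle starting one column to the right of center equals the floor of 3^n/2: Σ_{k∈ℤ} [ C(2n, n + 1 + 6k) − C(2n, n + 3 + 6k) ] = (3^n − 1)/2. -/

import Mathlib

/-- Binomial coefficient `C(r, j)` with an integer lower index, equal to `0`
when `j < 0` or `j > r`. -/
def zchoose (r : ℕ) (j : ℤ) : ℤ := if 0 ≤ j then (r.choose j.toNat : ℤ) else 0

lemma zchoose_eq_zero_of_neg {r : ℕ} {j : ℤ} (h : j < 0) : zchoose r j = 0 := by
  simp [zchoose, not_le.2 h]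

lemma zchoose_eq_zero_of_gt {r : ℕ} {j : ℤ} (h : (r : ℤ) < j) : zchoose r j = 0 := by
  have h0 : 0 ≤ j := le_of_lt (lt_of_le_of_lt (Int.ofNat_nonneg r) h)
  have : r < j.toNat := by omega
  simp [zchoose, h0, Nat.choose_eq_zero_of_lt this]

lemma zchoose_ne_zero_bounds {r : ℕ} {j : ℤ} (h : zchoose r j ≠ 0) :
    0 ≤ j ∧ j ≤ (r : ℤ) := by
  constructor
  · by_contra hc; exact h (zchoose_eq_zero_of_neg (by omega))
  · by_contra hc; exact h (zchoose_eq_zero_of_gt (by omega))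

lemma zchoose_pascal (r : ℕ) (j : ℤ) :
    zchoose (r + 1) j = zchoose r j + zchoose r (j - 1) := by
  rcases lt_trichotomy j 0 with h | h | h
  · rw [zchoose_eq_zero_of_neg h, zchoose_eq_zero_of_neg h,
      zchoose_eq_zero_of_neg (by omega)]
    ring
  · subst h
    simp [zchoose, zchoose_eq_zero_of_neg (show (0:ℤ) - 1 < 0 by norm_num)]
  · have h0 : 0 ≤ j := le_of_lt h
    have h1 : 0 ≤ j - 1 := by omega
    simp only [zchoose, if_pos h0, if_pos h1]
    have hj : j.toNat = (j - 1).toNat + 1 := by omega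
    rw [hj, Nat.choose_succ_succ']
    push_cast
    ring

lemma zchoose_symm (r : ℕ) (j : ℤ) : zchoose r j = zchoose r ((r : ℤ) - j) := by
  rcases lt_trichotomy j 0 with h | h | h
  · rw [zchoose_eq_zero_of_neg h, zchoose_eq_zero_of_gt (by omega)]
  · subst h; simp [zchoose]
  · rcases le_or_gt j (r : ℤ) with hr | hr
    · have h0 : 0 ≤ j := le_of_lt h
      have h1 : 0 ≤ (r : ℤ) - j := by omega
      simp only [zchoose, if_pos h0, if_pos h1]
      have : ((r : ℤ) - j).toNat = r - j.toNat := by omega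
      rw [this, Nat.choose_symm (by omega)]
    · rw [zchoose_eq_zero_of_gt hr, zchoose_eq_zero_of_neg (by omega)]

/-- The sum of `C(m, j)` over all `j ≡ c (mod 6)`. -/
noncomputable def G (m : ℕ) (c : ℤ) : ℤ := ∑ᶠ k : ℤ, zchoose m (c + 6 * k)

lemma G_support_finite (m : ℕ) (c : ℤ) :
    (Function.support fun k : ℤ => zchoose m (c + 6 * k)).Finite := by
  apply Set.Finite.subset (Set.finite_Icc (-(c.natAbs : ℤ) - m) ((c.natAbs : ℤ) + m))
  intro k hk
  have := zchoose_ne_zero_bounds hk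
  simp only [Set.mem_Icc]
  omega

lemma G_succ (m : ℕ) (c : ℤ) : G (m + 1) c = G m c + G m (c - 1) := by
  unfold G
  rw [← finsum_add_distrib (G_support_finite m c)
    (by exact G_support_finite m (c - 1))]
  · apply finsum_congr
    intro k
    rw [zchoose_pascal]
    ring_nf

lemma G_period (m : ℕ) (c : ℤ) : G m (c + 6) = G m c := by
  unfold G
  rw [← finsum_comp_equiv (Equiv.addRight (1 : ℤ)) (f := fun k => zchoose m (c + 6 * k))]
  apply finsum_congr
  intro k
  simp only [Equiv.coe_addRight]
  ring_nf

lemma G_symm (m : ℕ) (c : ℤ) : G m c = G m ((m : ℤ) - c) := by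
  unfold G
  rw [← finsum_comp_equiv (Equiv.neg ℤ) (f := fun k => zchoose m ((m : ℤ) - c + 6 * k))]
  apply finsum_congr
  intro k
  simp only [Equiv.neg_apply]
  rw [zchoose_symm m (c + 6 * k)]
  ring_nf

lemma G_zero_eq_zero (c : ℤ) (h : ∀ k : ℤ, c + 6 * k ≠ 0) : G 0 c = 0 := by
  unfold G
  apply finsum_eq_zero_of_forall_eq_zero
  intro k
  rcases lt_trichotomy (c + 6 * k) 0 with h' | h' | h'
  · exact zchoose_eq_zero_of_neg h'
  · exact absurd h' (h k)
  · exact zchoose_eq_zero_of_gt (by exact_mod_cast h')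

lemma G_zero_zero : G 0 0 = 1 := by
  unfold G
  rw [finsum_eq_single _ (0 : ℤ)]
  · simp [zchoose]
  · intro k hk
    rcases lt_trichotomy ((0:ℤ) + 6 * k) 0 with h' | h' | h'
    · exact zchoose_eq_zero_of_neg h'
    · omega
    · exact zchoose_eq_zero_of_gt (by exact_mod_cast h')

lemma key (n : ℕ) :
    2 * (G (2 * n) (n + 1) - G (2 * n) (n + 3)) = 3 ^ n - 1 ∧
    2 * (G (2 * n) n - G (2 * n) (n + 2)) = 3 ^ n + 1 := by
  induction n with
  | zero =>
    constructor <;> simp only [Nat.mul_zero, Nat.cast_zero, zero_add]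
    · rw [G_zero_eq_zero 1 (by intro k; omega),
        G_zero_eq_zero 3 (by intro k; omega)]
      norm_num
    · rw [G_zero_zero, G_zero_eq_zero 2 (by intro k; omega)]
      norm_num
  | succ n ih =>
    obtain ⟨ih1, ih2⟩ := ih
    have hm : 2 * (n + 1) = (2 * n + 1) + 1 := by ring
    have expand : ∀ c : ℤ, G (2 * (n + 1)) c
        = G (2 * n) c + 2 * G (2 * n) (c - 1) + G (2 * n) (c - 2) := by
      intro c
      rw [hm, G_succ, G_succ, G_succ]
      ring_nf
    -- symmetry facts on row 2n
    have s1 : G (2 * n) ((n : ℤ) - 1) = G (2 * n) ((n : ℤ) + 1) := by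
      have := G_symm (2 * n) ((n : ℤ) - 1)
      rw [this]
      congr 1
      push_cast
      ring
    have s2 : G (2 * n) ((n : ℤ) + 4) = G (2 * n) ((n : ℤ) + 2) := by
      have hp : G (2 * n) (((n : ℤ) - 2) + 6) = G (2 * n) ((n : ℤ) - 2) :=
        G_period (2 * n) ((n : ℤ) - 2)
      have : ((n : ℤ) - 2) + 6 = (n : ℤ) + 4 := by ring
      rw [this] at hp
      rw [hp, G_symm (2 * n) ((n : ℤ) - 2)]
      congr 1
      push_cast
      ring
    have e1 : (((n : ℕ) + 1 : ℕ) : ℤ) + 1 = (n : ℤ) + 2 := by push_cast; ring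
    have e2 : (((n : ℕ) + 1 : ℕ) : ℤ) + 3 = (n : ℤ) + 4 := by push_cast; ring
    have e3 : (((n : ℕ) + 1 : ℕ) : ℤ) = (n : ℤ) + 1 := by push_cast; ring
    have e4 : (((n : ℕ) + 1 : ℕ) : ℤ) + 2 = (n : ℤ) + 3 := by push_cast; ring
    constructor
    · rw [e1, e2, expand, expand]
      have r1 : (n : ℤ) + 2 - 1 = (n : ℤ) + 1 := by ring
      have r2 : (n : ℤ) + 2 - 2 = (n : ℤ) := by ring
      have r3 : (n : ℤ) + 4 - 1 = (n : ℤ) + 3 := by ring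
      have r4 : (n : ℤ) + 4 - 2 = (n : ℤ) + 2 := by ring
      rw [r1, r2, r3, r4, s2]
      ring_nf
      ring_nf at ih1 ih2
      linarith
    · rw [e4, e3, expand, expand]
      have r1 : (n : ℤ) + 1 - 1 = (n : ℤ) := by ring
      have r2 : (n : ℤ) + 1 - 2 = (n : ℤ) - 1 := by ring
      have r3 : (n : ℤ) + 3 - 1 = (n : ℤ) + 2 := by ring
      have r4 : (n : ℤ) + 3 - 2 = (n : ℤ) + 1 := by ring
      rw [r1, r2, r3, r4, s1]
      ring_nf
      ring_nf at ih1 ih2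
      linarith

/-- The period-6 alternating window sum of row 2n of Pascal's triangle starting one
column right of center equals ⌊3^n / 2⌋ = (3^n − 1)/2. -/
theorem period_six_window_sum_shifted (n : ℕ) :
    ∑ᶠ k : ℤ, (zchoose (2 * n) (n + 1 + 6 * k) - zchoose (2 * n) (n + 3 + 6 * k)) =
      (3 ^ n - 1) / 2 := by
  have hsplit : ∑ᶠ k : ℤ, (zchoose (2 * n) (n + 1 + 6 * k) - zchoose (2 * n) (n + 3 + 6 * k))
      = G (2 * n) (n + 1) - G (2 * n) (n + 3) := by
    unfold G
    rw [← finsum_sub_distrib (by exact G_support_finite (2 * n) (n + 1))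
      (by exact G_support_finite (2 * n) (n + 3))]
  have hkey := (key n).1
  rw [hsplit]
  omega
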